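/- Fix ξ > 0 and integers 1 ≤ I < N. Let u ∈ ∏_{i=1}^{I} X_i, let E ⊆ ∏_{i=I+1}^{N} X_i, and let B ⊆ Z_u be measurable with μ(B) > (1 − ξ/128)·μ(Z_u) and μ(Z_E) > ξ/16. Define E⁰ = { v ∈ E : μ(B ∩ Z_v) > (3/4)·μ(Z_u)·μ(Z_v) }. Then μ(Z_{E⁰}) > (1/2)·μ(Z_E). -/

import Mathlib

open MeasureTheory ENNReal Filter

/-- The coordinate space: Lean index `n` is paper index `n+1`, so this is
`X_{n+1} = {0,1,…,5^{n+1}}`. -/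
abbrev Xc (n : ℕ) : Type := Fin (5 ^ (n + 1) + 1)

/-- The weight of a point of `X_{n+1}`: `μ_{n+1}(0) = 1/2`, `μ_{n+1}(i) = 1/(2·5^{n+1})`
for `i ≠ 0`. -/
noncomputable def w (n : ℕ) (a : Xc n) : ℝ≥0∞ :=
  if a = 0 then 1 / 2 else 1 / (2 * 5 ^ (n + 1))

/-- The full product space `X = ∏_{n ≥ 1} X_n`. -/
abbrev XX : Type := (n : ℕ) → Xc n

/-- The cylinder `Z_A` determined by a set `A` of configurations on a finite set `Γ`
of coordinates. -/
def cylSet (Γ : Finset ℕ) (A : Set ((i : Γ) → Xc i)) : Set XX :=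
  {x | (fun i : Γ => x i) ∈ A}

/-- The point cylinder `Z_u`. -/
def cylPt (Γ : Finset ℕ) (u : (i : Γ) → Xc i) : Set XX := cylSet Γ {u}

/-- `μ` is the product measure `⊗ μ_n` iff every point cylinder gets the product of the
weights of its coordinates. (This property determines the product measure uniquely.) -/
def IsProductMeasure (μ : Measure XX) : Prop :=
  ∀ (Γ : Finset ℕ) (u : (i : Γ) → Xc i), μ (cylPt Γ u) = ∏ i : Γ, w i (u i)

-- auxiliary lemmas

lemma measurableSet_cylSet (Γ : Finset ℕ) (A : Set ((i : Γ) → Xc i)) :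
    MeasurableSet (cylSet Γ A) :=
  (measurable_pi_lambda _ (fun _ => measurable_pi_apply _)) A.toFinite.measurableSet

lemma measurableSet_cylPt (Γ : Finset ℕ) (u : (i : Γ) → Xc i) :
    MeasurableSet (cylPt Γ u) := measurableSet_cylSet Γ {u}

lemma mem_cylPt_iff {Γ : Finset ℕ} {u : (i : Γ) → Xc i} {x : XX} :
    x ∈ cylPt Γ u ↔ ∀ i : Γ, x i = u i := by
  simp [cylPt, cylSet, funext_iff]

lemma w_pos (n : ℕ) (a : Xc n) : 0 < w n a := by
  unfold w; split
  · simp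
  · rw [ENNReal.div_pos_iff]
    exact ⟨one_ne_zero, ENNReal.mul_ne_top (by norm_num) (ENNReal.pow_ne_top (by norm_num))⟩

lemma w_lt_top (n : ℕ) (a : Xc n) : w n a < ⊤ := by
  unfold w; split
  · simp
  · refine ENNReal.div_lt_top (by norm_num) ?_
    exact mul_ne_zero (by norm_num) (pow_ne_zero _ (by norm_num))

lemma cylPt_pos {μ : Measure XX} (hμ : IsProductMeasure μ) (Γ : Finset ℕ)
    (u : (i : Γ) → Xc i) : 0 < μ (cylPt Γ u) := by
  rw [hμ]
  exact pos_iff_ne_zero.mpr (Finset.prod_ne_zero_iff.mpr (fun i _ => (w_pos _ _).ne'))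

lemma cylPt_lt_top {μ : Measure XX} (hμ : IsProductMeasure μ) (Γ : Finset ℕ)
    (u : (i : Γ) → Xc i) : μ (cylPt Γ u) < ⊤ := by
  rw [hμ]
  exact ENNReal.prod_lt_top (fun i _ => w_lt_top _ _)

lemma measure_univ_eq {μ : Measure XX} (hμ : IsProductMeasure μ) : μ Set.univ = 1 := by
  have h := hμ ∅ (fun i => absurd i.2 (Finset.notMem_empty _))
  have h2 : cylPt ∅ (fun i => absurd i.2 (Finset.notMem_empty _)) = Set.univ := by
    ext x
    simp only [mem_cylPt_iff, Set.mem_univ, iff_true]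
    rintro ⟨i, hi⟩
    exact absurd hi (Finset.notMem_empty _)
  rw [h2] at h
  simpa using h

noncomputable def glue {Γ Δ : Finset ℕ} (u : (i : Γ) → Xc i) (v : (i : Δ) → Xc i)
    (i : (Γ ∪ Δ : Finset ℕ)) : Xc i :=
  if h : (i : ℕ) ∈ Γ then u ⟨i, h⟩
  else v ⟨i, (Finset.mem_union.mp i.2).resolve_left h⟩

lemma cylPt_inter {Γ Δ : Finset ℕ} (hd : Disjoint Γ Δ) (u : (i : Γ) → Xc i)
    (v : (i : Δ) → Xc i) :
    cylPt Γ u ∩ cylPt Δ v = cylPt (Γ ∪ Δ) (glue u v) := by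
  ext x
  simp only [Set.mem_inter_iff, mem_cylPt_iff]
  constructor
  · rintro ⟨h1, h2⟩ ⟨i, hi⟩
    by_cases h : i ∈ Γ
    · simpa [glue, h] using h1 ⟨i, h⟩
    · have hiΔ : i ∈ Δ := (Finset.mem_union.mp hi).resolve_left h
      simpa [glue, h] using h2 ⟨i, hiΔ⟩
  · intro h
    constructor
    · rintro ⟨i, hi⟩
      simpa [glue, hi] using h ⟨i, Finset.mem_union_left _ hi⟩
    · rintro ⟨i, hi⟩
      have hiG : i ∉ Γ := fun hg => (Finset.disjoint_left.mp hd hg) hi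
      simpa [glue, hiG] using h ⟨i, Finset.mem_union_right _ hi⟩

lemma prod_glue {Γ Δ : Finset ℕ} (hd : Disjoint Γ Δ) (u : (i : Γ) → Xc i)
    (v : (i : Δ) → Xc i) :
    ∏ i : (Γ ∪ Δ : Finset ℕ), w i (glue u v i)
      = (∏ i : Γ, w i (u i)) * ∏ i : Δ, w i (v i) := by
  classical
  set f : ℕ → ℝ≥0∞ := fun n =>
    if h : n ∈ Γ then w n (u ⟨n, h⟩) else if h : n ∈ Δ then w n (v ⟨n, h⟩) else 1 with hf
  have h1 : ∏ i : (Γ ∪ Δ : Finset ℕ), w i (glue u v i) = ∏ n ∈ Γ ∪ Δ, f n := by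
    rw [← Finset.prod_coe_sort (Γ ∪ Δ) f]
    refine Finset.prod_congr rfl ?_
    rintro ⟨i, hi⟩ _
    by_cases h : i ∈ Γ
    · simp [glue, hf, h]
    · have hiΔ : i ∈ Δ := (Finset.mem_union.mp hi).resolve_left h
      simp [glue, hf, h, hiΔ]
  have h2 : ∏ n ∈ Γ, f n = ∏ i : Γ, w i (u i) := by
    rw [← Finset.prod_coe_sort Γ f]
    refine Finset.prod_congr rfl ?_
    rintro ⟨i, hi⟩ _
    simp [hf, hi]
  have h3 : ∏ n ∈ Δ, f n = ∏ i : Δ, w i (v i) := by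
    rw [← Finset.prod_coe_sort Δ f]
    refine Finset.prod_congr rfl ?_
    rintro ⟨i, hi⟩ _
    have hiG : i ∉ Γ := fun hg => (Finset.disjoint_left.mp hd hg) hi
    simp [hf, hi, hiG]
  rw [h1, Finset.prod_union hd, h2, h3]

lemma measure_cylPt_inter {μ : Measure XX} (hμ : IsProductMeasure μ)
    {Γ Δ : Finset ℕ} (hd : Disjoint Γ Δ) (u : (i : Γ) → Xc i) (v : (i : Δ) → Xc i) :
    μ (cylPt Γ u ∩ cylPt Δ v) = μ (cylPt Γ u) * μ (cylPt Δ v) := by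
  rw [cylPt_inter hd, hμ, hμ, hμ, prod_glue hd]

lemma measure_inter_cylSet (μ : Measure XX) {S : Set XX} (hS : MeasurableSet S)
    (Γ : Finset ℕ) (A : Set ((i : Γ) → Xc i)) :
    μ (S ∩ cylSet Γ A) = ∑ a ∈ A.toFinite.toFinset, μ (S ∩ cylPt Γ a) := by
  classical
  have h1 : S ∩ cylSet Γ A = ⋃ a ∈ A.toFinite.toFinset, S ∩ cylPt Γ a := by
    ext x
    simp only [Set.mem_inter_iff, cylSet, cylPt, Set.mem_setOf_eq, Set.mem_iUnion,
      Set.Finite.mem_toFinset, Set.mem_singleton_iff]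
    constructor
    · rintro ⟨hxS, hxA⟩
      exact ⟨_, hxA, hxS, rfl⟩
    · rintro ⟨a, ha, hxS, he⟩
      exact ⟨hxS, he ▸ ha⟩
  rw [h1, measure_biUnion_finset ?_ (fun a _ => hS.inter (measurableSet_cylPt _ _))]
  intro a _ b _ hab
  refine Set.disjoint_left.mpr fun x hxa hxb => hab ?_
  have h1 : (fun i : Γ => x i) = a := hxa.2
  have h2 : (fun i : Γ => x i) = b := hxb.2
  rw [← h1, h2]

lemma measure_cylSet (μ : Measure XX) (Γ : Finset ℕ) (A : Set ((i : Γ) → Xc i)) :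
    μ (cylSet Γ A) = ∑ a ∈ A.toFinite.toFinset, μ (cylPt Γ a) := by
  simpa using measure_inter_cylSet μ MeasurableSet.univ Γ A

lemma threeq (a : ℝ≥0∞) : 3/4 * a + 1/4 * a = a := by
  rw [← add_mul, ENNReal.div_add_div_same,
    ENNReal.div_eq_one_iff (by norm_num) (by norm_num) |>.mpr (by norm_num), one_mul]

lemma main_aux (μ : Measure XX) (hμ : IsProductMeasure μ) (ξ : ℝ≥0∞)
    {Γ₁ Γ₂ : Finset ℕ} (hd : Disjoint Γ₁ Γ₂)
    (u : (i : Γ₁) → Xc i) (E : Set ((i : Γ₂) → Xc i))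
    (B : Set XX) (hBmeas : MeasurableSet B)
    (hBu : B ⊆ cylPt Γ₁ u)
    (hB : (1 - ξ / 128) * μ (cylPt Γ₁ u) < μ B)
    (hE : ξ / 16 < μ (cylSet Γ₂ E)) :
    1 / 2 * μ (cylSet Γ₂ E) <
      μ (cylSet Γ₂
        {v | v ∈ E ∧ 3 / 4 * (μ (cylPt Γ₁ u) * μ (cylPt Γ₂ v)) <
          μ (B ∩ cylPt Γ₂ v)}) := by
  classical
  set mZu := μ (cylPt Γ₁ u) with hmZu
  have hZu0 : mZu ≠ 0 := (cylPt_pos hμ _ _).ne'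
  have hZut : mZu ≠ ⊤ := (cylPt_lt_top hμ _ _).ne
  set E0 : Set ((i : Γ₂) → Xc i) :=
    {v | v ∈ E ∧ 3 / 4 * (mZu * μ (cylPt Γ₂ v)) < μ (B ∩ cylPt Γ₂ v)} with hE0def
  set F : Set ((i : Γ₂) → Xc i) := E \ E0 with hFdef
  have hEsplit : μ (cylSet Γ₂ E) = μ (cylSet Γ₂ E0) + μ (cylSet Γ₂ F) := by
    have hu2 : cylSet Γ₂ E = cylSet Γ₂ E0 ∪ cylSet Γ₂ F := by
      ext x
      simp only [cylSet, Set.mem_setOf_eq, Set.mem_union, hFdef, Set.mem_diff, hE0def]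
      tauto
    rw [hu2, measure_union ?_ (measurableSet_cylSet _ _)]
    exact Set.disjoint_left.mpr fun x hx1 hx2 => hx2.2 hx1
  have hSmeas : MeasurableSet (cylPt Γ₁ u \ B) := (measurableSet_cylPt _ _).diff hBmeas
  have hper : ∀ a ∈ F.toFinite.toFinset,
      1/4 * (mZu * μ (cylPt Γ₂ a)) ≤ μ ((cylPt Γ₁ u \ B) ∩ cylPt Γ₂ a) := by
    intro a ha
    rw [Set.Finite.mem_toFinset, hFdef, Set.mem_diff] at ha
    have hBle : μ (B ∩ cylPt Γ₂ a) ≤ 3/4 * (mZu * μ (cylPt Γ₂ a)) :=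
      not_lt.mp fun h => ha.2 ⟨ha.1, h⟩
    have hsplit : μ (cylPt Γ₁ u ∩ cylPt Γ₂ a)
        = μ (B ∩ cylPt Γ₂ a) + μ ((cylPt Γ₁ u \ B) ∩ cylPt Γ₂ a) := by
      have hu3 : cylPt Γ₁ u ∩ cylPt Γ₂ a
          = (B ∩ cylPt Γ₂ a) ∪ ((cylPt Γ₁ u \ B) ∩ cylPt Γ₂ a) := by
        rw [← Set.union_inter_distrib_right, Set.union_diff_cancel hBu]
      rw [hu3, measure_union
        (Set.disjoint_sdiff_right.mono Set.inter_subset_left Set.inter_subset_left)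
        (hSmeas.inter (measurableSet_cylPt _ _))]
    have hprod : μ (cylPt Γ₁ u ∩ cylPt Γ₂ a) = mZu * μ (cylPt Γ₂ a) :=
      measure_cylPt_inter hμ hd u a
    have hmtop : (3/4 : ℝ≥0∞) * (mZu * μ (cylPt Γ₂ a)) ≠ ⊤ :=
      ENNReal.mul_ne_top (ENNReal.div_lt_top (by norm_num) (by norm_num)).ne
        (ENNReal.mul_ne_top hZut (cylPt_lt_top hμ _ _).ne)
    have hle : 3/4 * (mZu * μ (cylPt Γ₂ a)) + 1/4 * (mZu * μ (cylPt Γ₂ a))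
        ≤ 3/4 * (mZu * μ (cylPt Γ₂ a)) + μ ((cylPt Γ₁ u \ B) ∩ cylPt Γ₂ a) :=
      calc 3/4 * (mZu * μ (cylPt Γ₂ a)) + 1/4 * (mZu * μ (cylPt Γ₂ a))
          = mZu * μ (cylPt Γ₂ a) := threeq _
        _ = μ (B ∩ cylPt Γ₂ a) + μ ((cylPt Γ₁ u \ B) ∩ cylPt Γ₂ a) := by
            rw [← hprod, hsplit]
        _ ≤ 3/4 * (mZu * μ (cylPt Γ₂ a)) + μ ((cylPt Γ₁ u \ B) ∩ cylPt Γ₂ a) :=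
            add_le_add_left hBle _
    exact (ENNReal.add_le_add_iff_left hmtop).mp hle
  have hsum : 1/4 * (mZu * μ (cylSet Γ₂ F)) ≤ μ (cylPt Γ₁ u \ B) := by
    calc 1/4 * (mZu * μ (cylSet Γ₂ F))
        = ∑ a ∈ F.toFinite.toFinset, 1/4 * (mZu * μ (cylPt Γ₂ a)) := by
          rw [measure_cylSet μ Γ₂ F, Finset.mul_sum, Finset.mul_sum]
      _ ≤ ∑ a ∈ F.toFinite.toFinset, μ ((cylPt Γ₁ u \ B) ∩ cylPt Γ₂ a) :=
          Finset.sum_le_sum hper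
      _ = μ ((cylPt Γ₁ u \ B) ∩ cylSet Γ₂ F) := (measure_inter_cylSet μ hSmeas _ _).symm
      _ ≤ μ (cylPt Γ₁ u \ B) := measure_mono Set.inter_subset_left
  have hBtop : μ B ≠ ⊤ := (lt_of_le_of_lt (measure_mono hBu) (cylPt_lt_top hμ _ _)).ne
  have hStop : μ (cylPt Γ₁ u \ B) ≤ ξ/128 * mZu := by
    rw [measure_diff hBu hBmeas.nullMeasurableSet hBtop, ← hmZu, tsub_le_iff_right]
    calc mZu = 1 * mZu := (one_mul _).symm
      _ ≤ (ξ/128 + (1 - ξ/128)) * mZu := by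
          refine mul_le_mul_left ?_ _
          rw [add_comm]; exact le_tsub_add
      _ = ξ/128 * mZu + (1 - ξ/128) * mZu := add_mul _ _ _
      _ ≤ ξ/128 * mZu + μ B := add_le_add_right hB.le _
  have hcancel : 1/4 * μ (cylSet Γ₂ F) ≤ ξ/128 := by
    have h := hsum.trans hStop
    rw [show (1:ℝ≥0∞)/4 * (mZu * μ (cylSet Γ₂ F)) = mZu * (1/4 * μ (cylSet Γ₂ F)) by ring,
        show ξ/128 * mZu = mZu * (ξ/128) by ring] at h
    exact (ENNReal.mul_le_mul_iff_right hZu0 hZut).mp h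
  have hEtop : μ (cylSet Γ₂ E) ≠ ⊤ := by
    refine (lt_of_le_of_lt (measure_mono (Set.subset_univ _)) ?_).ne
    rw [measure_univ_eq hμ]
    exact ENNReal.one_lt_top
  have hE0top : μ (cylSet Γ₂ E0) ≠ ⊤ := by
    refine (lt_of_le_of_lt (measure_mono (Set.subset_univ _)) ?_).ne
    rw [measure_univ_eq hμ]
    exact ENNReal.one_lt_top
  have hFlt : μ (cylSet Γ₂ F) < 1/2 * μ (cylSet Γ₂ E) := by
    have h2 : (ξ/128 : ℝ≥0∞) = 8⁻¹ * (ξ/16) := by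
      rw [div_eq_mul_inv, div_eq_mul_inv, show (128:ℝ≥0∞) = 16*8 by norm_num,
        ENNReal.mul_inv (Or.inl (by norm_num)) (Or.inl (by norm_num))]
      ring
    have h3 : (ξ/128 : ℝ≥0∞) < 8⁻¹ * μ (cylSet Γ₂ E) := by
      rw [h2]
      exact (ENNReal.mul_lt_mul_iff_right (by simp) (by simp)).mpr hE
    have h4 : 1/4 * μ (cylSet Γ₂ F) < 1/4 * (1/2 * μ (cylSet Γ₂ E)) := by
      refine lt_of_le_of_lt hcancel (lt_of_lt_of_le h3 (le_of_eq ?_))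
      rw [← mul_assoc]
      congr 1
      rw [one_div, one_div, ← ENNReal.mul_inv (Or.inl (by norm_num)) (Or.inr (by norm_num))]
      norm_num
    exact (ENNReal.mul_lt_mul_iff_right (by simp) (by simp)).mp h4
  have hhalf_top : (1/2 : ℝ≥0∞) * μ (cylSet Γ₂ E) ≠ ⊤ :=
    ENNReal.mul_ne_top (by simp) hEtop
  rw [← ENNReal.add_lt_add_iff_right hhalf_top]
  calc 1/2 * μ (cylSet Γ₂ E) + 1/2 * μ (cylSet Γ₂ E)
      = μ (cylSet Γ₂ E) := by
        rw [← add_mul, ENNReal.div_add_div_same,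
          ENNReal.div_eq_one_iff (by norm_num) (by norm_num) |>.mpr (by norm_num), one_mul]
    _ = μ (cylSet Γ₂ E0) + μ (cylSet Γ₂ F) := hEsplit
    _ < μ (cylSet Γ₂ E0) + 1/2 * μ (cylSet Γ₂ E) := ENNReal.add_lt_add_left hE0top hFlt

theorem statement0 (μ : Measure XX) (hμ : IsProductMeasure μ)
    (ξ : ℝ≥0∞) (hξ : 0 < ξ) (I N : ℕ) (hI : 1 ≤ I) (hIN : I < N)
    (u : (i : Finset.range I) → Xc i)
    (E : Set ((i : Finset.Ico I N) → Xc i))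
    (B : Set XX) (hBmeas : MeasurableSet B)
    (hBu : B ⊆ cylPt (Finset.range I) u)
    (hB : (1 - ξ / 128) * μ (cylPt (Finset.range I) u) < μ B)
    (hE : ξ / 16 < μ (cylSet (Finset.Ico I N) E)) :
    1 / 2 * μ (cylSet (Finset.Ico I N) E) <
      μ (cylSet (Finset.Ico I N)
        {v | v ∈ E ∧ 3 / 4 * (μ (cylPt (Finset.range I) u) * μ (cylPt (Finset.Ico I N) v)) <
          μ (B ∩ cylPt (Finset.Ico I N) v)}) := by
  refine main_aux μ hμ ξ ?_ u E B hBmeas hBu hB hE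
  simp only [Finset.disjoint_left, Finset.mem_range, Finset.mem_Ico]
  omega
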